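/- Let r: I → (0, ∞) be 1-Lipschitz on a compact interval I and g: I → [0,∞) integrable, and let J ⊆ I be a subinterval such that [t - r(t)/2, t + r(t)/2] ⊆ I for all t ∈ J. Then ∫_J (1/r(t)) ∫_{t - r(t)/2}^{t + r(t)/2} g(s) ds dt ≤ 4 ∫_I g(s) ds. -/

import Mathlib

open MeasureTheory

/-- Averaging bound: if `r` is a positive `1`-Lipschitz function on a compact
interval `I = [a,b]`, `g ≥ 0` is integrable on `I`, and `J = [c,d] ⊆ I` is a
subinterval with `[t - r(t)/2, t + r(t)/2] ⊆ I` for all `t ∈ J`, then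
`∫_J (1/r(t)) ∫_{t-r(t)/2}^{t+r(t)/2} g(s) ds dt ≤ 4 ∫_I g(s) ds`. -/
theorem averaging_fubini_bound (a b c d : ℝ) (hab : a ≤ b) (hcd : c ≤ d)
    (hJ : Set.Icc c d ⊆ Set.Icc a b)
    (r : ℝ → ℝ) (hrpos : ∀ t ∈ Set.Icc a b, 0 < r t)
    (hlip : ∀ t₁ ∈ Set.Icc a b, ∀ t₂ ∈ Set.Icc a b, |r t₁ - r t₂| ≤ |t₁ - t₂|)
    (g : ℝ → ℝ) (hg : ∀ s, 0 ≤ g s)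
    (hgint : IntervalIntegrable g volume a b)
    (hincl : ∀ t ∈ Set.Icc c d, Set.Icc (t - r t / 2) (t + r t / 2) ⊆ Set.Icc a b) :
    (∫ t in c..d, (1 / r t) * ∫ s in (t - r t / 2)..(t + r t / 2), g s)
      ≤ 4 * ∫ s in a..b, g s := by
  classical
  -- RHS nonneg
  have hRHS0 : 0 ≤ ∫ s in a..b, g s :=
    intervalIntegral.integral_nonneg hab (fun s _ => hg s)
  -- continuity of r on [a,b]
  have hrcont : ContinuousOn r (Set.Icc a b) := by
    apply LipschitzOnWith.continuousOn (K := 1)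
    intro x hx y hy
    rw [edist_dist, edist_dist, Real.dist_eq, Real.dist_eq]
    calc ENNReal.ofReal |r x - r y| ≤ ENNReal.ofReal |x - y| :=
          ENNReal.ofReal_le_ofReal (hlip x hx y hy)
      _ = 1 * ENNReal.ofReal |x - y| := (one_mul _).symm
  -- measurable projection version of r
  set R : ℝ → ℝ := fun t => r (max a (min t b)) with hRdef
  have hproj : ∀ t : ℝ, max a (min t b) ∈ Set.Icc a b := by
    intro t
    constructor
    · exact le_max_left _ _
    · exact max_le hab (min_le_right _ _)
  have hRcont : Continuous R := by
    apply hrcont.comp_continuous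
    · exact continuous_const.max (continuous_id.min continuous_const)
    · exact hproj
  have hReq : ∀ t ∈ Set.Icc a b, R t = r t := by
    intro t ht
    simp only [hRdef]
    rw [min_eq_left ht.2, max_eq_right ht.1]
  -- measurable version of g
  have hgIoc : IntegrableOn g (Set.Ioc a b) volume :=
    (intervalIntegrable_iff_integrableOn_Ioc_of_le hab).1 hgint
  have hgIcc : IntegrableOn g (Set.Icc a b) volume :=
    (integrableOn_Icc_iff_integrableOn_Ioc).2 hgIoc
  have hgm : AEMeasurable g (volume.restrict (Set.Icc a b)) := hgIcc.aemeasurable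
  set g' : ℝ → ℝ := hgm.mk g with hg'def
  have hg'meas : Measurable g' := hgm.measurable_mk
  have hgg' : g =ᵐ[volume.restrict (Set.Icc a b)] g' := hgm.ae_eq_mk
  set G : ℝ → ENNReal := fun s => ENNReal.ofReal (g' s) with hGdef
  have hGmeas : Measurable G := ENNReal.measurable_ofReal.comp hg'meas
  -- the kernel
  set K : ℝ × ℝ → ENNReal := fun p =>
    Set.indicator {q : ℝ × ℝ | q.1 - R q.1 / 2 < q.2 ∧ q.2 ≤ q.1 + R q.1 / 2}
      (fun q => ENNReal.ofReal (1 / R q.1) * G q.2) p with hKdef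
  have hKmeas : Measurable K := by
    apply Measurable.indicator
    · exact ((ENNReal.measurable_ofReal.comp
        ((measurable_const.div (hRcont.measurable.comp measurable_fst)))).mul
        (hGmeas.comp measurable_snd))
    · apply MeasurableSet.inter
      · exact measurableSet_lt ((measurable_fst.sub
          ((hRcont.measurable.comp measurable_fst).div_const 2))) measurable_snd
      · exact measurableSet_le measurable_snd ((measurable_fst.add
          ((hRcont.measurable.comp measurable_fst).div_const 2)))
  -- for fixed t, the s-integral of K
  have hKt : ∀ t : ℝ, (fun s => K (t, s)) =
      (Set.Ioc (t - R t / 2) (t + R t / 2)).indicator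
        (fun s => ENNReal.ofReal (1 / R t) * G s) := by
    intro t; funext s
    simp only [hKdef, Set.indicator, Set.mem_setOf_eq, Set.mem_Ioc]
  have hKint : ∀ t : ℝ, (∫⁻ s, K (t, s)) =
      ENNReal.ofReal (1 / R t) * ∫⁻ s in Set.Ioc (t - R t / 2) (t + R t / 2), G s := by
    intro t
    rw [show (fun s => K (t, s)) = _ from hKt t, lintegral_indicator measurableSet_Ioc,
      lintegral_const_mul' _ _ ENNReal.ofReal_ne_top]
  -- Step A: pointwise bound for t ∈ Ioc c d
  have stepA : ∀ t ∈ Set.Ioc c d,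
      ENNReal.ofReal ((1 / r t) * ∫ s in (t - r t / 2)..(t + r t / 2), g s)
        ≤ ∫⁻ s, K (t, s) := by
    intro t ht
    have htab : t ∈ Set.Icc a b := hJ (Set.Ioc_subset_Icc_self ht)
    have hrt : 0 < r t := hrpos t htab
    have hle : t - r t / 2 ≤ t + r t / 2 := by linarith
    have hS : Set.Ioc (t - r t / 2) (t + r t / 2) ⊆ Set.Icc a b :=
      (Set.Ioc_subset_Icc_self).trans (hincl t (Set.Ioc_subset_Icc_self ht))
    have hgg'S : g =ᵐ[volume.restrict (Set.Ioc (t - r t / 2) (t + r t / 2))] g' :=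
      ae_restrict_of_ae_restrict_of_subset hS hgg'
    have hinner : ENNReal.ofReal (∫ s in (t - r t / 2)..(t + r t / 2), g s)
        = ∫⁻ s in Set.Ioc (t - r t / 2) (t + r t / 2), G s := by
      rw [intervalIntegral.integral_of_le hle,
        ofReal_integral_eq_lintegral_ofReal (hgIcc.mono_set hS)
          (Filter.Eventually.of_forall (fun s => hg s))]
      exact lintegral_congr_ae (hgg'S.mono fun s hs => by rw [hGdef]; simp [hs])
    rw [hKint t, hReq t htab, ENNReal.ofReal_mul (by positivity), hinner]
  -- Step B: pointwise bound for fixed s after swapping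
  have stepB : ∀ s : ℝ, (∫⁻ t in Set.Ioc c d, K (t, s))
      ≤ (Set.Icc a b).indicator (fun s => 4 * G s) s := by
    intro s
    by_cases hs : ∃ t ∈ Set.Ioc c d, t - R t / 2 < s ∧ s ≤ t + R t / 2
    · obtain ⟨t₀, ht₀, hs₀⟩ := hs
      have ht₀ab : t₀ ∈ Set.Icc a b := hJ (Set.Ioc_subset_Icc_self ht₀)
      have hRt₀ : R t₀ = r t₀ := hReq t₀ ht₀ab
      have hsab : s ∈ Set.Icc a b := by
        apply hincl t₀ (Set.Ioc_subset_Icc_self ht₀)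
        rw [hRt₀] at hs₀
        exact ⟨by linarith [hs₀.1], hs₀.2⟩
      have hrs : 0 < r s := hrpos s hsab
      -- pointwise in t
      have hpt : ∀ t ∈ Set.Ioc c d, K (t, s) ≤
          (Set.Icc (s - r s) (s + r s)).indicator
            (fun _ => ENNReal.ofReal (2 / r s) * G s) t := by
        intro t ht
        by_cases hts : t - R t / 2 < s ∧ s ≤ t + R t / 2
        · have htab : t ∈ Set.Icc a b := hJ (Set.Ioc_subset_Icc_self ht)
          have hRt : R t = r t := hReq t htab
          rw [hRt] at hts
          have hrt : 0 < r t := hrpos t htab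
          have habs : |s - t| ≤ r t / 2 := abs_le.2 ⟨by linarith [hts.1], by linarith [hts.2]⟩
          have hlips : |r t - r s| ≤ r t / 2 := by
            calc |r t - r s| ≤ |t - s| := hlip t htab s hsab
              _ = |s - t| := (abs_sub_comm t s)
              _ ≤ r t / 2 := habs
          have h1 : r t / 2 ≤ r s := by
            have := (abs_le.1 hlips).2; linarith
          have h2 : r s ≤ 2 * r t := by
            have := (abs_le.1 hlips).1; linarith
          have hmem : t ∈ Set.Icc (s - r s) (s + r s) := by
            have := abs_le.1 habs
            constructor <;> nlinarith [this.1, this.2]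
          have hKval : K (t, s) = ENNReal.ofReal (1 / r t) * G s := by
            simp only [hKdef, Set.indicator, Set.mem_setOf_eq]
            rw [if_pos (by rw [hRt]; exact hts), hRt]
          rw [hKval, Set.indicator_of_mem hmem]
          apply mul_le_mul_left
          apply ENNReal.ofReal_le_ofReal
          rw [div_le_div_iff₀ hrt hrs]
          nlinarith
        · have : K (t, s) = 0 := by
            simp only [hKdef, Set.indicator, Set.mem_setOf_eq]
            rw [if_neg hts]
          rw [this]; exact zero_le
      rw [Set.indicator_of_mem hsab]
      calc (∫⁻ t in Set.Ioc c d, K (t, s))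
          ≤ ∫⁻ t in Set.Ioc c d,
              (Set.Icc (s - r s) (s + r s)).indicator
                (fun _ => ENNReal.ofReal (2 / r s) * G s) t := by
            apply lintegral_mono_ae
            rw [ae_restrict_iff' measurableSet_Ioc]
            exact Filter.Eventually.of_forall hpt
        _ ≤ ∫⁻ t, (Set.Icc (s - r s) (s + r s)).indicator
                (fun _ => ENNReal.ofReal (2 / r s) * G s) t :=
            lintegral_mono' Measure.restrict_le_self le_rfl
        _ = (ENNReal.ofReal (2 / r s) * G s) * volume (Set.Icc (s - r s) (s + r s)) := by
            rw [lintegral_indicator measurableSet_Icc, setLIntegral_const]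
        _ = 4 * G s := by
            rw [Real.volume_Icc, show s + r s - (s - r s) = 2 * r s by ring]
            rw [mul_comm (ENNReal.ofReal (2 / r s)) (G s), mul_assoc,
              ← ENNReal.ofReal_mul (by positivity)]
            rw [show 2 / r s * (2 * r s) = 4 by field_simp; ring]
            rw [mul_comm]
            norm_num
    · push_neg at hs
      have : ∀ t ∈ Set.Ioc c d, K (t, s) = 0 := by
        intro t ht
        simp only [hKdef, Set.indicator, Set.mem_setOf_eq]
        rw [if_neg]
        intro h
        exact absurd h.2 (not_le.2 (hs t ht h.1))
      calc (∫⁻ t in Set.Ioc c d, K (t, s)) = ∫⁻ t in Set.Ioc c d, 0 := by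
            apply setLIntegral_congr_fun measurableSet_Ioc
            exact this
        _ = 0 := lintegral_zero
        _ ≤ _ := zero_le
  -- total lintegral of G over [a,b]
  have hGtotal : (∫⁻ s in Set.Icc a b, G s) = ENNReal.ofReal (∫ s in a..b, g s) := by
    rw [intervalIntegral.integral_of_le hab, ← MeasureTheory.integral_Icc_eq_integral_Ioc,
      ofReal_integral_eq_lintegral_ofReal hgIcc (Filter.Eventually.of_forall (fun s => hg s))]
    exact (lintegral_congr_ae (hgg'.mono fun s hs => by rw [hGdef]; simp [hs])).symm
  -- main case split on integrability of the outer integrand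
  by_cases hint : IntervalIntegrable
      (fun t => (1 / r t) * ∫ s in (t - r t / 2)..(t + r t / 2), g s) volume c d
  · have hintOn : IntegrableOn
        (fun t => (1 / r t) * ∫ s in (t - r t / 2)..(t + r t / 2), g s)
        (Set.Ioc c d) volume :=
      (intervalIntegrable_iff_integrableOn_Ioc_of_le hcd).1 hint
    have hnn : 0 ≤ᵐ[volume.restrict (Set.Ioc c d)]
        (fun t => (1 / r t) * ∫ s in (t - r t / 2)..(t + r t / 2), g s) := by
      rw [Filter.EventuallyLE, ae_restrict_iff' measurableSet_Ioc]
      apply Filter.Eventually.of_forall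
      intro t ht
      have htab : t ∈ Set.Icc a b := hJ (Set.Ioc_subset_Icc_self ht)
      have hrt : 0 < r t := hrpos t htab
      have hle : t - r t / 2 ≤ t + r t / 2 := by linarith
      exact mul_nonneg (by positivity)
        (intervalIntegral.integral_nonneg hle (fun s _ => hg s))
    have key : ENNReal.ofReal
        (∫ t in c..d, (1 / r t) * ∫ s in (t - r t / 2)..(t + r t / 2), g s)
        ≤ ENNReal.ofReal (4 * ∫ s in a..b, g s) := by
      rw [intervalIntegral.integral_of_le hcd,
        ofReal_integral_eq_lintegral_ofReal hintOn hnn]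
      calc (∫⁻ t in Set.Ioc c d,
              ENNReal.ofReal ((1 / r t) * ∫ s in (t - r t / 2)..(t + r t / 2), g s))
          ≤ ∫⁻ t in Set.Ioc c d, ∫⁻ s, K (t, s) := by
            apply lintegral_mono_ae
            rw [ae_restrict_iff' measurableSet_Ioc]
            exact Filter.Eventually.of_forall stepA
        _ = ∫⁻ s, ∫⁻ t in Set.Ioc c d, K (t, s) := by
            apply lintegral_lintegral_swap
            exact hKmeas.aemeasurable
        _ ≤ ∫⁻ s, (Set.Icc a b).indicator (fun s => 4 * G s) s := lintegral_mono stepB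
        _ = 4 * ∫⁻ s in Set.Icc a b, G s := by
            rw [lintegral_indicator measurableSet_Icc,
              lintegral_const_mul' _ _ (by norm_num : (4 : ENNReal) ≠ ⊤)]
        _ = ENNReal.ofReal (4 * ∫ s in a..b, g s) := by
            rw [hGtotal, ENNReal.ofReal_mul (by norm_num : (0:ℝ) ≤ 4)]
            norm_num
    exact (ENNReal.ofReal_le_ofReal_iff (by positivity)).1 key
  · rw [intervalIntegral.integral_undef hint]
    positivity
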